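/- Let m be a positive integer and R a commutative ring which is an ℝ-algebra. Let g ∈ Mₘ(R) be symmetric and invertible, ζ ∈ R^{1×m}, z ∈ R invertible, and define W̄ := [[z, zζ, ½ z⁻¹ ζ g⁻¹ ζᵀ],[0, z·1ₘ, z⁻¹ g⁻¹ ζᵀ],[0, 0, z⁻¹]] (blocks of sizes (1, m, 1)). Let Ω₀ := [[f, C, 0],[T, W, g⁻¹Cᵀ],[0, Tᵀg, −f]] with f ∈ R, C ∈ R^{1×m}, T ∈ R^{m×1}, W ∈ Mₘ(R). Then the matrix W̄⁻¹ · Ω₀ · W̄ has the following blocks: (1,1) block f − ζT; (2,1) block T; (2,2) block W + Tζ − g⁻¹ζᵀTᵀg; (1,2) block C − ζW + (f − ζT)ζ + ½(ζ g⁻¹ ζᵀ)·Tᵀg; (3,2) block Tᵀ·(z²g); and (3,3) block ζT − f. In particular, under the residual Weyl transformation the torsion T is invariant and the metric block transforms as g ↦ z²g. -/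

import Mathlib

open Matrix

/-- 3×3 block matrix with block sizes (1, m, 1). -/
def B3 {R : Type*} {m : ℕ}
    (a11 : Matrix (Fin 1) (Fin 1) R) (a12 : Matrix (Fin 1) (Fin m) R) (a13 : Matrix (Fin 1) (Fin 1) R)
    (a21 : Matrix (Fin m) (Fin 1) R) (a22 : Matrix (Fin m) (Fin m) R) (a23 : Matrix (Fin m) (Fin 1) R)
    (a31 : Matrix (Fin 1) (Fin 1) R) (a32 : Matrix (Fin 1) (Fin m) R) (a33 : Matrix (Fin 1) (Fin 1) R) :
    Matrix (Fin 1 ⊕ (Fin m ⊕ Fin 1)) (Fin 1 ⊕ (Fin m ⊕ Fin 1)) R :=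
  Matrix.fromBlocks a11 (Matrix.fromCols a12 a13) (Matrix.fromRows a21 a31)
    (Matrix.fromBlocks a22 a23 a32 a33)

/-- Block extractors for a 3×3 block matrix with block sizes (1, m, 1). -/
def blk11 {R : Type*} {m : ℕ} (M : Matrix (Fin 1 ⊕ (Fin m ⊕ Fin 1)) (Fin 1 ⊕ (Fin m ⊕ Fin 1)) R) :
    Matrix (Fin 1) (Fin 1) R := M.submatrix Sum.inl Sum.inl
def blk12 {R : Type*} {m : ℕ} (M : Matrix (Fin 1 ⊕ (Fin m ⊕ Fin 1)) (Fin 1 ⊕ (Fin m ⊕ Fin 1)) R) :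
    Matrix (Fin 1) (Fin m) R := M.submatrix Sum.inl (fun j => Sum.inr (Sum.inl j))
def blk13 {R : Type*} {m : ℕ} (M : Matrix (Fin 1 ⊕ (Fin m ⊕ Fin 1)) (Fin 1 ⊕ (Fin m ⊕ Fin 1)) R) :
    Matrix (Fin 1) (Fin 1) R := M.submatrix Sum.inl (fun j => Sum.inr (Sum.inr j))
def blk21 {R : Type*} {m : ℕ} (M : Matrix (Fin 1 ⊕ (Fin m ⊕ Fin 1)) (Fin 1 ⊕ (Fin m ⊕ Fin 1)) R) :
    Matrix (Fin m) (Fin 1) R := M.submatrix (fun i => Sum.inr (Sum.inl i)) Sum.inl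
def blk22 {R : Type*} {m : ℕ} (M : Matrix (Fin 1 ⊕ (Fin m ⊕ Fin 1)) (Fin 1 ⊕ (Fin m ⊕ Fin 1)) R) :
    Matrix (Fin m) (Fin m) R := M.submatrix (fun i => Sum.inr (Sum.inl i)) (fun j => Sum.inr (Sum.inl j))
def blk23 {R : Type*} {m : ℕ} (M : Matrix (Fin 1 ⊕ (Fin m ⊕ Fin 1)) (Fin 1 ⊕ (Fin m ⊕ Fin 1)) R) :
    Matrix (Fin m) (Fin 1) R := M.submatrix (fun i => Sum.inr (Sum.inl i)) (fun j => Sum.inr (Sum.inr j))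
def blk31 {R : Type*} {m : ℕ} (M : Matrix (Fin 1 ⊕ (Fin m ⊕ Fin 1)) (Fin 1 ⊕ (Fin m ⊕ Fin 1)) R) :
    Matrix (Fin 1) (Fin 1) R := M.submatrix (fun i => Sum.inr (Sum.inr i)) Sum.inl
def blk32 {R : Type*} {m : ℕ} (M : Matrix (Fin 1 ⊕ (Fin m ⊕ Fin 1)) (Fin 1 ⊕ (Fin m ⊕ Fin 1)) R) :
    Matrix (Fin 1) (Fin m) R := M.submatrix (fun i => Sum.inr (Sum.inr i)) (fun j => Sum.inr (Sum.inl j))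
def blk33 {R : Type*} {m : ℕ} (M : Matrix (Fin 1 ⊕ (Fin m ⊕ Fin 1)) (Fin 1 ⊕ (Fin m ⊕ Fin 1)) R) :
    Matrix (Fin 1) (Fin 1) R := M.submatrix (fun i => Sum.inr (Sum.inr i)) (fun j => Sum.inr (Sum.inr j))

section
set_option linter.unusedSectionVars false
variable {R : Type*} [CommRing R] {m : ℕ}

lemma B3_mul
    (a11 : Matrix (Fin 1) (Fin 1) R) (a12 : Matrix (Fin 1) (Fin m) R) (a13 : Matrix (Fin 1) (Fin 1) R)
    (a21 : Matrix (Fin m) (Fin 1) R) (a22 : Matrix (Fin m) (Fin m) R) (a23 : Matrix (Fin m) (Fin 1) R)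
    (a31 : Matrix (Fin 1) (Fin 1) R) (a32 : Matrix (Fin 1) (Fin m) R) (a33 : Matrix (Fin 1) (Fin 1) R)
    (b11 : Matrix (Fin 1) (Fin 1) R) (b12 : Matrix (Fin 1) (Fin m) R) (b13 : Matrix (Fin 1) (Fin 1) R)
    (b21 : Matrix (Fin m) (Fin 1) R) (b22 : Matrix (Fin m) (Fin m) R) (b23 : Matrix (Fin m) (Fin 1) R)
    (b31 : Matrix (Fin 1) (Fin 1) R) (b32 : Matrix (Fin 1) (Fin m) R) (b33 : Matrix (Fin 1) (Fin 1) R) :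
    B3 a11 a12 a13 a21 a22 a23 a31 a32 a33 * B3 b11 b12 b13 b21 b22 b23 b31 b32 b33
      = B3 (a11*b11 + a12*b21 + a13*b31) (a11*b12 + a12*b22 + a13*b32) (a11*b13 + a12*b23 + a13*b33)
           (a21*b11 + a22*b21 + a23*b31) (a21*b12 + a22*b22 + a23*b32) (a21*b13 + a22*b23 + a23*b33)
           (a31*b11 + a32*b21 + a33*b31) (a31*b12 + a32*b22 + a33*b32) (a31*b13 + a32*b23 + a33*b33) := by
  ext (i|i|i) (j|j|j) <;>
    simp [B3, Matrix.mul_apply, Fintype.sum_sum_type, fromBlocks, fromCols, fromRows_apply_inl, fromRows_apply_inr,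
      Finset.sum_add_distrib] <;> ring

lemma B3_blk11 (a11 : Matrix (Fin 1) (Fin 1) R) (a12 : Matrix (Fin 1) (Fin m) R) (a13 : Matrix (Fin 1) (Fin 1) R)
    (a21 : Matrix (Fin m) (Fin 1) R) (a22 : Matrix (Fin m) (Fin m) R) (a23 : Matrix (Fin m) (Fin 1) R)
    (a31 : Matrix (Fin 1) (Fin 1) R) (a32 : Matrix (Fin 1) (Fin m) R) (a33 : Matrix (Fin 1) (Fin 1) R) :
    blk11 (B3 a11 a12 a13 a21 a22 a23 a31 a32 a33) = a11 := by
  ext i j; simp [blk11, B3]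

lemma B3_blk12 (a11 : Matrix (Fin 1) (Fin 1) R) (a12 : Matrix (Fin 1) (Fin m) R) (a13 : Matrix (Fin 1) (Fin 1) R)
    (a21 : Matrix (Fin m) (Fin 1) R) (a22 : Matrix (Fin m) (Fin m) R) (a23 : Matrix (Fin m) (Fin 1) R)
    (a31 : Matrix (Fin 1) (Fin 1) R) (a32 : Matrix (Fin 1) (Fin m) R) (a33 : Matrix (Fin 1) (Fin 1) R) :
    blk12 (B3 a11 a12 a13 a21 a22 a23 a31 a32 a33) = a12 := by
  ext i j; simp [blk12, B3, fromCols]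

lemma B3_blk21 (a11 : Matrix (Fin 1) (Fin 1) R) (a12 : Matrix (Fin 1) (Fin m) R) (a13 : Matrix (Fin 1) (Fin 1) R)
    (a21 : Matrix (Fin m) (Fin 1) R) (a22 : Matrix (Fin m) (Fin m) R) (a23 : Matrix (Fin m) (Fin 1) R)
    (a31 : Matrix (Fin 1) (Fin 1) R) (a32 : Matrix (Fin 1) (Fin m) R) (a33 : Matrix (Fin 1) (Fin 1) R) :
    blk21 (B3 a11 a12 a13 a21 a22 a23 a31 a32 a33) = a21 := by
  ext i j; simp [blk21, B3, fromRows_apply_inl]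

lemma B3_blk22 (a11 : Matrix (Fin 1) (Fin 1) R) (a12 : Matrix (Fin 1) (Fin m) R) (a13 : Matrix (Fin 1) (Fin 1) R)
    (a21 : Matrix (Fin m) (Fin 1) R) (a22 : Matrix (Fin m) (Fin m) R) (a23 : Matrix (Fin m) (Fin 1) R)
    (a31 : Matrix (Fin 1) (Fin 1) R) (a32 : Matrix (Fin 1) (Fin m) R) (a33 : Matrix (Fin 1) (Fin 1) R) :
    blk22 (B3 a11 a12 a13 a21 a22 a23 a31 a32 a33) = a22 := by
  ext i j; simp [blk22, B3]

lemma B3_blk32 (a11 : Matrix (Fin 1) (Fin 1) R) (a12 : Matrix (Fin 1) (Fin m) R) (a13 : Matrix (Fin 1) (Fin 1) R)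
    (a21 : Matrix (Fin m) (Fin 1) R) (a22 : Matrix (Fin m) (Fin m) R) (a23 : Matrix (Fin m) (Fin 1) R)
    (a31 : Matrix (Fin 1) (Fin 1) R) (a32 : Matrix (Fin 1) (Fin m) R) (a33 : Matrix (Fin 1) (Fin 1) R) :
    blk32 (B3 a11 a12 a13 a21 a22 a23 a31 a32 a33) = a32 := by
  ext i j; simp [blk32, B3]

lemma B3_blk33 (a11 : Matrix (Fin 1) (Fin 1) R) (a12 : Matrix (Fin 1) (Fin m) R) (a13 : Matrix (Fin 1) (Fin 1) R)
    (a21 : Matrix (Fin m) (Fin 1) R) (a22 : Matrix (Fin m) (Fin m) R) (a23 : Matrix (Fin m) (Fin 1) R)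
    (a31 : Matrix (Fin 1) (Fin 1) R) (a32 : Matrix (Fin 1) (Fin m) R) (a33 : Matrix (Fin 1) (Fin 1) R) :
    blk33 (B3 a11 a12 a13 a21 a22 a23 a31 a32 a33) = a33 := by
  ext i j; simp [blk33, B3, fromRows]

lemma B3_one : (B3 1 0 0 0 1 0 0 0 1 : Matrix (Fin 1 ⊕ (Fin m ⊕ Fin 1)) _ R) = 1 := by
  ext (i|i|i) (j|j|j) <;>
    simp [B3, fromBlocks, fromCols, fromRows_apply_inl, fromRows_apply_inr, Matrix.one_apply, Sum.inl.injEq, Sum.inr.injEq]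

lemma tr11 (M : Matrix (Fin 1) (Fin 1) R) : M.transpose = M := by
  ext i j; fin_cases i; fin_cases j; simp

lemma B3_congr {a11 b11 a13 b13 a31 b31 a33 b33 : Matrix (Fin 1) (Fin 1) R}
    {a12 b12 a32 b32 : Matrix (Fin 1) (Fin m) R} {a21 b21 a23 b23 : Matrix (Fin m) (Fin 1) R}
    {a22 b22 : Matrix (Fin m) (Fin m) R}
    (h11 : a11 = b11) (h12 : a12 = b12) (h13 : a13 = b13)
    (h21 : a21 = b21) (h22 : a22 = b22) (h23 : a23 = b23)
    (h31 : a31 = b31) (h32 : a32 = b32) (h33 : a33 = b33) :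
    B3 a11 a12 a13 a21 a22 a23 a31 a32 a33 = B3 b11 b12 b13 b21 b22 b23 b31 b32 b33 := by
  subst h11 h12 h13 h21 h22 h23 h31 h32 h33; rfl

lemma half_half {M : Type*} [AddCommMonoid M] [Module ℝ M] (Y : M) :
    (2⁻¹ : ℝ) • Y + (2⁻¹ : ℝ) • Y = Y := by
  rw [← add_smul]; norm_num
end

/-- The blocks of the residual Weyl transform `W̄⁻¹ Ω₀ W̄` of the dressed curvature
`Ω₀ = [[f, C, 0],[T, W, g⁻¹Cᵀ],[0, Tᵀg, −f]]`: in particular the torsion `T` is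
invariant and the metric block transforms as `g ↦ z²g`. -/

theorem stmt_12 (m : ℕ) (hm : 0 < m) (R : Type*) [CommRing R] [Algebra ℝ R]
    (g : Matrix (Fin m) (Fin m) R) (hgsymm : g.transpose = g) (hg : IsUnit g.det)
    (ζ : Matrix (Fin 1) (Fin m) R) (z zi : R) (hz : z * zi = 1)
    (f : R) (C : Matrix (Fin 1) (Fin m) R) (T : Matrix (Fin m) (Fin 1) R)
    (W : Matrix (Fin m) (Fin m) R) :
    let Wb := B3 (z • 1) (z • ζ) ((2⁻¹ : ℝ) • (zi • (ζ * g⁻¹ * ζ.transpose)))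
        0 (z • (1 : Matrix (Fin m) (Fin m) R)) (zi • (g⁻¹ * ζ.transpose)) 0 0 (zi • 1);
    let Ω₀ := B3 (f • 1) C 0 T W (g⁻¹ * C.transpose) 0 (T.transpose * g) ((-f) • 1);
    blk11 (Wb⁻¹ * Ω₀ * Wb) = f • 1 - ζ * T ∧
    blk21 (Wb⁻¹ * Ω₀ * Wb) = T ∧
    blk22 (Wb⁻¹ * Ω₀ * Wb) = W + T * ζ - g⁻¹ * ζ.transpose * (T.transpose * g) ∧
    blk12 (Wb⁻¹ * Ω₀ * Wb)
      = C - ζ * W + (f • 1 - ζ * T) * ζ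
          + (2⁻¹ : ℝ) • ((ζ * g⁻¹ * ζ.transpose) * (T.transpose * g)) ∧
    blk32 (Wb⁻¹ * Ω₀ * Wb) = T.transpose * ((z * z) • g) ∧
    blk33 (Wb⁻¹ * Ω₀ * Wb) = ζ * T - f • 1 := by
  intro Wb Ω₀
  have hzi : zi * z = 1 := by rw [mul_comm]; exact hz
  have hGg : g⁻¹ * g = 1 := nonsing_inv_mul g hg
  have hgG : g * g⁻¹ = 1 := mul_nonsing_inv g hg
  set V : Matrix (Fin 1 ⊕ (Fin m ⊕ Fin 1)) (Fin 1 ⊕ (Fin m ⊕ Fin 1)) R :=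
    B3 (zi • 1) ((-zi) • ζ) ((2⁻¹ : ℝ) • (zi • (ζ * g⁻¹ * ζ.transpose)))
      0 (zi • (1 : Matrix (Fin m) (Fin m) R)) ((-zi) • (g⁻¹ * ζ.transpose)) 0 0 (z • 1) with hV
  have hVW : V * Wb = 1 := by
    rw [hV, show Wb = B3 (z • 1) (z • ζ) ((2⁻¹ : ℝ) • (zi • (ζ * g⁻¹ * ζ.transpose)))
        0 (z • (1 : Matrix (Fin m) (Fin m) R)) (zi • (g⁻¹ * ζ.transpose)) 0 0 (zi • 1) from rfl,
      B3_mul, ← B3_one]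
    apply B3_congr <;>
      simp [Matrix.smul_mul, Matrix.mul_smul, smul_smul, hz, hzi, Matrix.mul_assoc]
    have h2 : (algebraMap ℝ R) (2⁻¹:ℝ) * 2 = 1 := by
      have e2 : (algebraMap ℝ R) (2⁻¹:ℝ) * (algebraMap ℝ R) (2:ℝ) = 1 := by
        rw [← _root_.map_mul]; norm_num
      rw [show ((2:R)) = algebraMap ℝ R (2:ℝ) from by rw [map_ofNat]]
      exact e2
    all_goals (match_scalars <;>
      first
        | ring1
        | linear_combination zi ^ 2 * h2)
  have hWinv : Wb⁻¹ = V := inv_eq_left_inv hVW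
  rw [hWinv, hV,
    show Wb = B3 (z • 1) (z • ζ) ((2⁻¹ : ℝ) • (zi • (ζ * g⁻¹ * ζ.transpose)))
        0 (z • (1 : Matrix (Fin m) (Fin m) R)) (zi • (g⁻¹ * ζ.transpose)) 0 0 (zi • 1) from rfl,
    show Ω₀ = B3 (f • 1) C 0 T W (g⁻¹ * C.transpose) 0 (T.transpose * g) ((-f) • 1) from rfl,
    B3_mul, B3_mul, B3_blk11, B3_blk21, B3_blk22, B3_blk12, B3_blk32, B3_blk33]
  have hgG' : ∀ X : Matrix (Fin m) (Fin 1) R, g * (g⁻¹ * X) = X := fun X => by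
    rw [← Matrix.mul_assoc, hgG, Matrix.one_mul]
  have hswap : T.transpose * ζ.transpose = ζ * T := by
    rw [← Matrix.transpose_mul]
    ext i j; fin_cases i; fin_cases j; simp
  refine ⟨?_, ?_, ?_, ?_, ?_, ?_⟩ <;>
    simp [Matrix.smul_mul, Matrix.mul_smul, smul_smul, Matrix.mul_assoc, Matrix.add_mul,
      Matrix.sub_mul, Matrix.mul_add, Matrix.mul_sub, Matrix.one_mul, Matrix.mul_one,
      hgG', hswap] <;>
    match_scalars <;>
    first
      | ring1
      | linear_combination hz
      | linear_combination (-1 : R) * hz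
      | linear_combination f * hz
      | linear_combination (-f) * hz
      | linear_combination (algebraMap ℝ R 2⁻¹) * hz
      | linear_combination (-(algebraMap ℝ R 2⁻¹)) * hz
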